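/- Optimality of the greedy assignment in parallel networks: In a sorted parallel instance, the greedy assignment σ* minimizes the cost among all assignments; that is, for every assignment σ (every map from users to edges with |σ^{-1}(j)| ≤ c_j for each edge j), Σ_{u=1}^n v_u l_{σ*(u)} ≤ Σ_{u=1}^n v_u l_{σ(u)}. -/

import Mathlib

open Finset

/-- Abel summation key lemma: if `w` is nonincreasing and nonnegative on `[1,N]`
and all prefix sums of `f` are at most those of `g`, then the weighted sum of `f`
is at most that of `g`. -/
lemma abel_key (N : ℕ) (f g : ℕ → ℝ) :
    ∀ w : ℕ → ℝ,
    (∀ u u', 1 ≤ u → u ≤ u' → u' ≤ N → w u' ≤ w u) →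
    (∀ u, 1 ≤ u → u ≤ N → 0 ≤ w u) →
    (∀ t, 1 ≤ t → t ≤ N → ∑ u ∈ Icc 1 t, f u ≤ ∑ u ∈ Icc 1 t, g u) →
    ∑ u ∈ Icc 1 N, w u * f u ≤ ∑ u ∈ Icc 1 N, w u * g u := by
  induction N with
  | zero => intro w _ _ _; simp
  | succ N ih =>
    intro w hw_mono hw_nonneg hpre
    have key : ∀ F : ℕ → ℝ, ∑ u ∈ Icc 1 (N+1), w u * F u
        = (∑ u ∈ Icc 1 N, (w u - w (N+1)) * F u)
          + w (N+1) * ∑ u ∈ Icc 1 (N+1), F u := by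
      intro F
      have h1 : ∑ u ∈ Icc 1 N, (w u - w (N+1)) * F u
          = ∑ u ∈ Icc 1 N, w u * F u - w (N+1) * ∑ u ∈ Icc 1 N, F u := by
        rw [Finset.mul_sum, ← Finset.sum_sub_distrib]
        exact Finset.sum_congr rfl fun u _ => by ring
      rw [Finset.sum_Icc_succ_top (by omega : (1:ℕ) ≤ N+1) F,
        Finset.sum_Icc_succ_top (by omega : (1:ℕ) ≤ N+1) (fun u => w u * F u), h1]
      ring
    rw [key f, key g]
    have h1 : ∑ u ∈ Icc 1 N, (w u - w (N+1)) * f u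
        ≤ ∑ u ∈ Icc 1 N, (w u - w (N+1)) * g u := by
      apply ih
      · intro u u' hu huu' hu'
        have := hw_mono u u' hu huu' (by omega)
        linarith
      · intro u hu huN
        have := hw_mono u (N+1) hu (by omega) le_rfl
        linarith
      · intro t ht htN
        exact hpre t ht (by omega)
    have h2 : w (N+1) * ∑ u ∈ Icc 1 (N+1), f u
        ≤ w (N+1) * ∑ u ∈ Icc 1 (N+1), g u :=
      mul_le_mul_of_nonneg_left (hpre (N+1) (by omega) le_rfl)
        (hw_nonneg (N+1) (by omega) le_rfl)
    linarith

/-- **Optimality of the greedy assignment in parallel networks**: in a sorted parallel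
instance (users `1,…,n` with nonincreasing nonnegative values of time, edges `1,…,m` with
nondecreasing latencies and positive integer capacities of total at least `n`), the greedy
assignment `σ*` — which sends user `u` to the unique edge `j` with
`Σ_{j'<j} c_{j'} < u ≤ Σ_{j'≤j} c_{j'}` — minimizes `Σ_u v_u l_{σ(u)}` among all
capacity-respecting assignments `σ`. -/
theorem greedy_assignment_optimal
    (n m : ℕ) (hn : 1 ≤ n) (hm : 1 ≤ m)
    (v l : ℕ → ℝ) (c : ℕ → ℕ)
    (hv_sorted : ∀ u u', 1 ≤ u → u ≤ u' → u' ≤ n → v u' ≤ v u)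
    (hv_nonneg : ∀ u, 1 ≤ u → u ≤ n → 0 ≤ v u)
    (hl_sorted : ∀ j j', 1 ≤ j → j ≤ j' → j' ≤ m → l j ≤ l j')
    (hc_pos : ∀ j, 1 ≤ j → j ≤ m → 1 ≤ c j)
    (hcap : n ≤ ∑ j ∈ Finset.Icc 1 m, c j)
    (σstar : ℕ → ℕ)
    (hσstar_mem : ∀ u ∈ Finset.Icc 1 n, σstar u ∈ Finset.Icc 1 m)
    (hσstar_greedy : ∀ u ∈ Finset.Icc 1 n,
      ∑ j ∈ Finset.Ico 1 (σstar u), c j < u ∧ u ≤ ∑ j ∈ Finset.Icc 1 (σstar u), c j)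
    (σ : ℕ → ℕ)
    (hσ_mem : ∀ u ∈ Finset.Icc 1 n, σ u ∈ Finset.Icc 1 m)
    (hσ_cap : ∀ j ∈ Finset.Icc 1 m,
      ((Finset.Icc 1 n).filter fun u => σ u = j).card ≤ c j) :
    ∑ u ∈ Finset.Icc 1 n, v u * l (σstar u) ≤ ∑ u ∈ Finset.Icc 1 n, v u * l (σ u) := by
  apply abel_key n (fun u => l (σstar u)) (fun u => l (σ u)) v hv_sorted hv_nonneg
  -- It remains to prove the prefix claim for each k ∈ [1, n].
  intro k hk1 hkn
  have hsub : Icc 1 k ⊆ Icc 1 n := Finset.Icc_subset_Icc_right hkn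
  have hmapσ : ∀ u ∈ Icc 1 k, σ u ∈ Icc 1 m := fun u hu => hσ_mem u (hsub hu)
  have hmapσs : ∀ u ∈ Icc 1 k, σstar u ∈ Icc 1 m := fun u hu => hσstar_mem u (hsub hu)
  set A : ℕ → ℕ := fun j => ((Icc 1 k).filter fun u => σ u = j).card with hA
  set G : ℕ → ℕ := fun j => ((Icc 1 k).filter fun u => σstar u = j).card with hG
  -- fiber decomposition of the prefix sums
  have hfib : ∀ τ : ℕ → ℕ, (∀ u ∈ Icc 1 k, τ u ∈ Icc 1 m) →
      ∑ u ∈ Icc 1 k, l (τ u)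
        = ∑ j ∈ Icc 1 m, (((Icc 1 k).filter fun u => τ u = j).card : ℝ) * l j := by
    intro τ hτ
    rw [← Finset.sum_fiberwise_of_maps_to hτ (fun u => l (τ u))]
    refine Finset.sum_congr rfl fun j hj => ?_
    have : ∑ u ∈ (Icc 1 k).filter (fun u => τ u = j), l (τ u)
        = ∑ u ∈ (Icc 1 k).filter (fun u => τ u = j), l j :=
      Finset.sum_congr rfl fun u hu => by rw [(Finset.mem_filter.mp hu).2]
    rw [this, Finset.sum_const, nsmul_eq_mul]
  -- totals
  have htotal : ∀ τ : ℕ → ℕ, (∀ u ∈ Icc 1 k, τ u ∈ Icc 1 m) →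
      ∑ j ∈ Icc 1 m, ((Icc 1 k).filter fun u => τ u = j).card = k := by
    intro τ hτ
    rw [← Finset.card_eq_sum_card_fiberwise hτ, Nat.card_Icc]
    omega
  have htotA : ∑ j ∈ Icc 1 m, A j = k := htotal σ hmapσ
  have htotG : ∑ j ∈ Icc 1 m, G j = k := htotal σstar hmapσs
  -- prefix sums over edges
  have hAt : ∀ t, 1 ≤ t → t ≤ m →
      ∑ j ∈ Icc 1 t, A j ≤ min k (∑ j ∈ Icc 1 t, c j) := by
    intro t ht htm
    refine le_min ?_ ?_
    · calc ∑ j ∈ Icc 1 t, A j ≤ ∑ j ∈ Icc 1 m, A j :=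
            Finset.sum_le_sum_of_subset (Finset.Icc_subset_Icc_right htm)
        _ = k := htotA
    · refine Finset.sum_le_sum fun j hj => ?_
      have hjm : j ∈ Icc 1 m := Finset.Icc_subset_Icc_right htm hj
      calc A j ≤ ((Icc 1 n).filter fun u => σ u = j).card :=
            Finset.card_le_card (Finset.filter_subset_filter _ hsub)
        _ ≤ c j := hσ_cap j hjm
  have hGt : ∀ t, 1 ≤ t → t ≤ m →
      min k (∑ j ∈ Icc 1 t, c j) ≤ ∑ j ∈ Icc 1 t, G j := by
    intro t ht htm
    have hGcard : ∑ j ∈ Icc 1 t, G j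
        = ((Icc 1 k).filter fun u => σstar u ∈ Icc 1 t).card := by
      rw [Finset.card_eq_sum_card_fiberwise
        (f := σstar) (s := (Icc 1 k).filter fun u => σstar u ∈ Icc 1 t) (t := Icc 1 t)
        (fun u hu => (Finset.mem_filter.mp hu).2)]
      refine Finset.sum_congr rfl fun j hj => congrArg Finset.card ?_
      ext u
      simp only [Finset.mem_filter, Finset.filter_filter]
      constructor
      · rintro ⟨hu, hj'⟩
        exact ⟨hu, by rw [hj']; exact hj, hj'⟩
      · rintro ⟨hu, _, hj'⟩
        exact ⟨hu, hj'⟩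
    rw [hGcard]
    have hsub2 : Icc 1 (min k (∑ j ∈ Icc 1 t, c j))
        ⊆ (Icc 1 k).filter fun u => σstar u ∈ Icc 1 t := by
      intro u hu
      simp only [Finset.mem_Icc] at hu
      have hu1 : 1 ≤ u := hu.1
      have huk : u ≤ k := le_trans hu.2 (min_le_left _ _)
      have huC : u ≤ ∑ j ∈ Icc 1 t, c j := le_trans hu.2 (min_le_right _ _)
      have hun : u ∈ Icc 1 n := Finset.mem_Icc.mpr ⟨hu1, le_trans huk hkn⟩
      have hmem := hσstar_mem u hun
      simp only [Finset.mem_Icc] at hmem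
      have hgre := (hσstar_greedy u hun).1
      have hle : σstar u ≤ t := by
        by_contra hlt
        push_neg at hlt
        have hss : Icc 1 t ⊆ Finset.Ico 1 (σstar u) := by
          intro x hx
          simp only [Finset.mem_Icc] at hx
          simp only [Finset.mem_Ico]
          omega
        have := Finset.sum_le_sum_of_subset hss (f := c)
        omega
      refine Finset.mem_filter.mpr ⟨Finset.mem_Icc.mpr ⟨hu1, huk⟩,
        Finset.mem_Icc.mpr ⟨hmem.1, hle⟩⟩
    calc min k (∑ j ∈ Icc 1 t, c j)
        = (Icc 1 (min k (∑ j ∈ Icc 1 t, c j))).card := by rw [Nat.card_Icc]; omega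
      _ ≤ _ := Finset.card_le_card hsub2
  -- second Abel summation, over edges, with weights l m - l j
  have habel : ∑ j ∈ Icc 1 m, (l m - l j) * (A j : ℝ)
      ≤ ∑ j ∈ Icc 1 m, (l m - l j) * (G j : ℝ) := by
    apply abel_key m (fun j => (A j : ℝ)) (fun j => (G j : ℝ))
    · intro j j' hj hjj' hj'm
      have := hl_sorted j j' hj hjj' hj'm
      linarith
    · intro j hj hjm
      have := hl_sorted j m hj hjm le_rfl
      linarith
    · intro t ht htm
      have hA' := hAt t ht htm
      have hG' := hGt t ht htm
      have : ∑ j ∈ Icc 1 t, A j ≤ ∑ j ∈ Icc 1 t, G j := le_trans hA' hG'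
      have hcast : ((∑ j ∈ Icc 1 t, A j : ℕ) : ℝ) ≤ ((∑ j ∈ Icc 1 t, G j : ℕ) : ℝ) :=
        Nat.cast_le.mpr this
      push_cast at hcast
      exact hcast
  -- expand and finish
  have expand : ∀ x : ℕ → ℕ,
      ∑ j ∈ Icc 1 m, (l m - l j) * (x j : ℝ)
        = l m * ((∑ j ∈ Icc 1 m, x j : ℕ) : ℝ) - ∑ j ∈ Icc 1 m, (x j : ℝ) * l j := by
    intro x
    push_cast
    rw [Finset.mul_sum, ← Finset.sum_sub_distrib]
    exact Finset.sum_congr rfl fun j _ => by ring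
  rw [expand A, expand G, htotA, htotG] at habel
  rw [hfib σstar hmapσs, hfib σ hmapσ]
  simp only [← hA, ← hG] at *
  linarith
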